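/- Let (D,S) be a ∘-decorated Dyck path of size n with rise_∘(D,S) = ℓ. Then every part of the rise-touch composition α^Rise(D,S) is a positive integer and the parts of α^Rise(D,S) sum to n − ℓ; that is, α^Rise(D,S) is a composition of n − ℓ. -/

import Mathlib

open Finset

namespace DeltaCat

/-- `i`-th entry (0-indexed) of an area sequence, defaulting to `0`. -/
def ent (l : List ℕ) (i : ℕ) : ℕ := l.getD i 0

/-- `l` is the area sequence of a Dyck path (of size `l.length ≥ 1`): it is nonempty,
starts with `0`, and consecutive entries increase by at most one. -/
def IsDyck (l : List ℕ) : Prop :=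
  l ≠ [] ∧ ent l 0 = 0 ∧ ∀ i < l.length, i + 1 < l.length → ent l (i + 1) ≤ ent l i + 1

instance (l : List ℕ) : Decidable (IsDyck l) := by unfold IsDyck; infer_instance

/-- the area of a Dyck path -/
def area (l : List ℕ) : ℕ := l.sum

/-- the diagonal inversions of a Dyck path: pairs `(i,j)`, `i < j`, with
`a_i = a_j` or `a_i = a_j + 1` (0-indexed rows). -/
def dinvPairs (l : List ℕ) : Finset (ℕ × ℕ) :=
  (Finset.range l.length ×ˢ Finset.range l.length).filter
    (fun p => p.1 < p.2 ∧ (ent l p.1 = ent l p.2 ∨ ent l p.1 = ent l p.2 + 1))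

/-- the number of diagonal inversions -/
def dinv (l : List ℕ) : ℕ := (dinvPairs l).card

/-- `b'(k) = #{j > k : a_j = a_k} + #{j < k : a_j = a_k + 1}` (0-indexed rows). -/
def bval (l : List ℕ) (k : ℕ) : ℕ :=
  ((Finset.range l.length).filter (fun j => k < j ∧ ent l j = ent l k)).card +
  ((Finset.range l.length).filter (fun j => j < k ∧ ent l j = ent l k + 1)).card

/-- row `i` (0-indexed) is a double rise -/
def IsRise (l : List ℕ) (i : ℕ) : Prop := i + 1 < l.length ∧ ent l (i + 1) = ent l i + 1

instance (l : List ℕ) (i : ℕ) : Decidable (IsRise l i) := by unfold IsRise; infer_instance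

/-- row `i` (0-indexed) is a peak -/
def IsPeak (l : List ℕ) (i : ℕ) : Prop := i < l.length ∧ ¬ IsRise l i

instance (l : List ℕ) (i : ℕ) : Decidable (IsPeak l i) := by unfold IsPeak; infer_instance

/-- `Rise_∘(D,S)`: the decorated rows which are double rises -/
def riseSet (l : List ℕ) (S : Finset ℕ) : Finset ℕ := S.filter (fun i => IsRise l i)

/-- `Peak_∘(D,S)`: the decorated rows which are peaks -/
def peakSet (l : List ℕ) (S : Finset ℕ) : Finset ℕ := S.filter (fun i => IsPeak l i)

/-- `area_∘(D,S)` -/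
def areaC (l : List ℕ) (S : Finset ℕ) : ℕ := area l - ∑ i ∈ riseSet l S, ent l (i + 1)

/-- `dinv_∘(D,S)` -/
def dinvC (l : List ℕ) (S : Finset ℕ) : ℕ := dinv l - ∑ i ∈ peakSet l S, bval l i

/-- the largest row index (0-indexed) attaining the maximal area value -/
def lastMaxRow (l : List ℕ) : ℕ :=
  ((Finset.range l.length).filter
    (fun i => ∀ j ∈ Finset.range l.length, ent l j ≤ ent l i)).sup id

/-- `S` is a valid set of ∘-decorations on the rows of `l` : a set of rows not containing
the largest index attaining the maximal area value. -/
def ValidDec (l : List ℕ) (S : Finset ℕ) : Prop :=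
  (∀ i ∈ S, i < l.length) ∧ lastMaxRow l ∉ S

instance (l : List ℕ) (S : Finset ℕ) : Decidable (ValidDec l S) := by
  unfold ValidDec; infer_instance

/-- the (0-indexed) rows where the path touches the diagonal, i.e. the starts of segments -/
def segStarts (l : List ℕ) : List ℕ :=
  (List.range l.length).filter (fun i => ent l i == 0)

/-- the touch composition of a Dyck path: the list of lengths of the maximal segments -/
def touchComp (l : List ℕ) : List ℕ :=
  List.zipWith (fun cur next => next - cur) (segStarts l) ((segStarts l).drop 1 ++ [l.length])

/-- the rise-touch composition `α^Rise(D,S)`: the touch composition with the number of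
decorated double rises in each segment subtracted from the corresponding part. -/
def riseTouch (l : List ℕ) (S : Finset ℕ) : List ℕ :=
  List.zipWith
    (fun cur next => (next - cur) - ((riseSet l S).filter (fun i => cur ≤ i ∧ i < next)).card)
    (segStarts l) ((segStarts l).drop 1 ++ [l.length])

/-- all lists of length `n` with entries at most `n`; this contains every Dyck path
area sequence of size `n`. -/
def allSeqs (n : ℕ) : Finset (List ℕ) :=
  (Finset.univ : Finset (Fin n → Fin (n + 1))).image fun v => (List.ofFn v).map Fin.val

/-- the Finset of all Dyck paths of size `n` (encoded by their area sequences) -/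
def dyckPaths (n : ℕ) : Finset (List ℕ) := (allSeqs n).filter IsDyck

/-- the Finset of all ∘-decorated Dyck paths of size `n` -/
def decPaths (n : ℕ) : Finset (List ℕ × Finset ℕ) :=
  ((allSeqs n) ×ˢ (Finset.range n).powerset).filter fun p => IsDyck p.1 ∧ ValidDec p.1 p.2

/-- `Cat^Rise_{α,k,ℓ}(q,t)`, the generating function of ∘-decorated Dyck paths of size
`|α| + ℓ` with `k` decorated peaks, `ℓ` decorated double rises and rise-touch composition
`α`, by the statistics `dinv_∘` and `area_∘`; it is `0` when `k < 0` or `ℓ < 0`. -/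
def CatRise {R : Type*} [CommRing R] (q t : R) (α : List ℕ) (k ℓ : ℤ) : R :=
  if 0 ≤ k ∧ 0 ≤ ℓ then
    ∑ p ∈ (decPaths (α.sum + ℓ.toNat)).filter
        (fun p => (peakSet p.1 p.2).card = k.toNat ∧ (riseSet p.1 p.2).card = ℓ.toNat ∧
          riseTouch p.1 p.2 = α),
      q ^ dinvC p.1 p.2 * t ^ areaC p.1 p.2
  else 0

end DeltaCat

open DeltaCat

lemma card_lt_aux (R : Finset ℕ) (a m : ℕ) (ham : a < m)
    (h : ∀ r ∈ R, r + 1 ≠ m) :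
    (R.filter (fun i => a ≤ i ∧ i < m)).card < m - a := by
  have hsub : (R.filter (fun i => a ≤ i ∧ i < m)) ⊆ Finset.Ico a (m - 1) := by
    intro r hr
    simp only [Finset.mem_filter] at hr
    have := h r hr.1
    simp only [Finset.mem_Ico]
    omega
  have := Finset.card_le_card hsub
  rw [Nat.card_Ico] at this
  omega

lemma card_split_aux (R : Finset ℕ) (a b n : ℕ) (hab : a ≤ b) (hbn : b ≤ n) :
    (R.filter (fun i => a ≤ i ∧ i < n)).card =
    (R.filter (fun i => a ≤ i ∧ i < b)).card + (R.filter (fun i => b ≤ i ∧ i < n)).card := by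
  have h1 : R.filter (fun i => a ≤ i ∧ i < n)
      = R.filter (fun i => (a ≤ i ∧ i < b) ∨ (b ≤ i ∧ i < n)) := by
    apply Finset.filter_congr
    intro x _
    constructor <;> (intro hx; omega)
  rw [h1, Finset.filter_or]
  rw [Finset.card_union_of_disjoint]
  rw [Finset.disjoint_left]
  intro x hx hx'
  simp only [Finset.mem_filter] at hx hx'
  omega

lemma key_aux (R : Finset ℕ) (n : ℕ) :
    ∀ (s : List ℕ) (a : ℕ), List.Chain (· < ·) a s → (∀ x ∈ s, x < n) → a < n →
    (∀ r ∈ R, r + 1 < n ∧ r + 1 ∉ s) →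
    (∀ x ∈ List.zipWith
        (fun c nx => (nx - c) - (R.filter (fun i => c ≤ i ∧ i < nx)).card)
        (a :: s) (s ++ [n]), 0 < x) ∧
    (List.zipWith (fun c nx => (nx - c) - (R.filter (fun i => c ≤ i ∧ i < nx)).card)
        (a :: s) (s ++ [n])).sum
      + (R.filter (fun i => a ≤ i ∧ i < n)).card = n - a := by
  intro s
  induction s with
  | nil =>
    intro a _ _ han hR
    have hc : (R.filter (fun i => a ≤ i ∧ i < n)).card < n - a := by
      apply card_lt_aux R a n han
      intro r hr
      have := (hR r hr).1
      omega
    constructor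
    · intro x hx
      simp only [List.nil_append, List.zipWith_cons_cons, List.zipWith_nil_left,
        List.mem_singleton] at hx
      omega
    · simp only [List.nil_append, List.zipWith_cons_cons, List.zipWith_nil_left,
        List.sum_cons, List.sum_nil]
      omega
  | cons b s' ih =>
    intro a hchain hlt han hR
    have hab : a < b := (List.chain_cons.mp hchain).1
    have hchain' : List.Chain (· < ·) b s' := (List.chain_cons.mp hchain).2
    have hbn : b < n := hlt b (by simp)
    have hR' : ∀ r ∈ R, r + 1 < n ∧ r + 1 ∉ s' := by
      intro r hr
      obtain ⟨h1, h2⟩ := hR r hr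
      exact ⟨h1, fun hmem => h2 (by simp [hmem])⟩
    obtain ⟨ihpos, ihsum⟩ := ih b hchain' (fun x hx => hlt x (by simp [hx])) hbn hR'
    have hc1 : (R.filter (fun i => a ≤ i ∧ i < b)).card < b - a := by
      apply card_lt_aux R a b hab
      intro r hr hrb
      exact (hR r hr).2 (by simp [hrb])
    have hsplit := card_split_aux R a b n (le_of_lt hab) (le_of_lt hbn)
    constructor
    · intro x hx
      simp only [List.cons_append, List.zipWith_cons_cons, List.mem_cons] at hx
      rcases hx with h | h
      · omega
      · exact ihpos x h
    · simp only [List.cons_append, List.zipWith_cons_cons, List.sum_cons]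
      omega

lemma length_of_mem_allSeqs {n : ℕ} {l : List ℕ} (h : l ∈ allSeqs n) : l.length = n := by
  simp only [allSeqs, Finset.mem_image] at h
  obtain ⟨v, _, rfl⟩ := h
  simp

/-- For a ∘-decorated Dyck path `(D, S)` of size `n` with `rise_∘(D,S) = ℓ`, the
rise-touch composition `α^Rise(D,S)` has positive parts summing to `n - ℓ`, i.e. it is a
composition of `n - ℓ`. -/
theorem riseTouch_is_composition (n : ℕ) (p : List ℕ × Finset ℕ) (hp : p ∈ decPaths n)
    (ℓ : ℕ) (hℓ : (riseSet p.1 p.2).card = ℓ) :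
    (∀ x ∈ riseTouch p.1 p.2, 0 < x) ∧ (riseTouch p.1 p.2).sum + ℓ = n := by
  obtain ⟨l, S⟩ := p
  simp only [decPaths, Finset.mem_filter, Finset.mem_product, Finset.mem_powerset] at hp
  obtain ⟨⟨hall, -⟩, hdyck, -⟩ := hp
  have hlen : l.length = n := length_of_mem_allSeqs hall
  obtain ⟨hne, h0, -⟩ := hdyck
  have hn : 0 < n := by
    rcases Nat.eq_zero_or_pos n with h | h
    · exact absurd (List.length_eq_zero_iff.mp (hlen.trans h)) hne
    · exact h
  -- segStarts l = 0 :: tail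
  obtain ⟨m, rfl⟩ : ∃ m, n = m + 1 := ⟨n - 1, by omega⟩
  have hseg : segStarts l = 0 :: (((List.range m).map Nat.succ).filter
      (fun i => ent l i == 0)) := by
    unfold segStarts
    rw [hlen, List.range_succ_eq_map, List.filter_cons]
    simp [h0]
  set s' : List ℕ := ((List.range m).map Nat.succ).filter (fun i => ent l i == 0) with hs'
  have hmem_s' : ∀ x ∈ s', x < m + 1 ∧ ent l x = 0 := by
    intro x hx
    rw [hs'] at hx
    simp only [List.mem_filter, List.mem_map, List.mem_range, beq_iff_eq] at hx
    obtain ⟨⟨y, hy, rfl⟩, h2⟩ := hx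
    exact ⟨by omega, h2⟩
  have hpw : (segStarts l).Pairwise (· < ·) := by
    unfold segStarts
    exact List.pairwise_lt_range.filter _
  rw [hseg] at hpw
  have hchain : List.Chain (· < ·) 0 s' := List.isChain_iff_pairwise.mpr hpw
  set R : Finset ℕ := riseSet l S with hR
  have hRfact : ∀ r ∈ R, r + 1 < m + 1 ∧ r + 1 ∉ s' := by
    intro r hr
    rw [hR] at hr
    simp only [riseSet, Finset.mem_filter] at hr
    obtain ⟨-, h1, h2⟩ := hr
    refine ⟨by omega, fun hmem => ?_⟩
    have := (hmem_s' _ hmem).2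
    omega
  obtain ⟨hpos, hsum⟩ := key_aux R (m + 1) s' 0 hchain
    (fun x hx => (hmem_s' x hx).1) (by omega) hRfact
  have hRT : riseTouch l S = List.zipWith
      (fun c nx => (nx - c) - (R.filter (fun i => c ≤ i ∧ i < nx)).card)
      (0 :: s') (s' ++ [m + 1]) := by
    unfold riseTouch
    rw [hseg, hlen]
    rfl
  have hRcard : (R.filter (fun i => 0 ≤ i ∧ i < m + 1)).card = ℓ := by
    rw [← hℓ]
    congr 1
    apply Finset.filter_true_of_mem
    intro r hr
    have := (hRfact r hr).1
    omega
  rw [hRT]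
  exact ⟨hpos, by omega⟩
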